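/- arXiv:2202.09400 — 4 statements merged into one kernel-verified Lean document; each statement's English description precedes it below -/
import Mathlib

section
/- Rotation equivariance of cross-correlation: for an image f : ℝ² → ℝ^k, a kernel K : ℝ² → ℝ^(l×k) supported on integer points, and a rotation g ∈ SO(2) preserving ℤ², the rotated cross-correlation satisfies T_g⁰(K ⋆ f) = (T_g⁰ K) ⋆ (T_g⁰ f), where (K ⋆ f)(v) = ∑_{w∈ℤ²} K(w) · f(v+w) and (T_g⁰ h)(v) = h(g⁻¹v). -/
open Matrix
/-- Embedding of the integer lattice `ℤ²` into `ℝ²`. -/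
def toR (w : Fin 2 → ℤ) : Fin 2 → ℝ := fun i => (w i : ℝ)

/-- Cross-correlation of a finitely supported matrix-valued kernel `K` on the lattice `ℤ²`
with a vector-valued image `f : ℝ² → ℝ^k`: `(K ⋆ f)(v) = ∑_{w ∈ ℤ²} K(w) · f(v + w)`. -/
noncomputable def corr {k l : ℕ} (K : (Fin 2 → ℤ) →₀ Matrix (Fin l) (Fin k) ℝ)
    (f : (Fin 2 → ℝ) → (Fin k → ℝ)) : (Fin 2 → ℝ) → (Fin l → ℝ) :=
  fun v => ∑ w ∈ K.support, (K w).mulVec (f (v + toR w))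

/-- Rotation equivariance of cross-correlation: for `g ∈ SO(2)` mapping `ℤ²` bijectively to
itself (via `σ`), we have `T_g⁰(K ⋆ f) = (T_g⁰ K) ⋆ (T_g⁰ f)`, where `(T_g⁰ h)(v) = h(g⁻¹ v)`
(and `g⁻¹ = gᵀ` since `g` is orthogonal), and the rotated kernel is `K ∘ σ⁻¹`. -/
theorem stmt0 {k l : ℕ} (g : Matrix (Fin 2) (Fin 2) ℝ)
    (hg : g ∈ Matrix.specialOrthogonalGroup (Fin 2) ℝ)
    (σ : (Fin 2 → ℤ) ≃ (Fin 2 → ℤ))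
    (hσ : ∀ w : Fin 2 → ℤ, toR (σ w) = g.mulVec (toR w))
    (K : (Fin 2 → ℤ) →₀ Matrix (Fin l) (Fin k) ℝ)
    (f : (Fin 2 → ℝ) → (Fin k → ℝ)) (v : Fin 2 → ℝ) :
    corr K f (gᵀ.mulVec v)
      = corr (Finsupp.equivMapDomain σ K) (fun x => f (gᵀ.mulVec x)) v := by
  have hgt : gᵀ * g = 1 := hg.1.1
  unfold corr
  refine Finset.sum_equiv σ (fun w => ?_) (fun w hw => ?_)
  · simp [Finsupp.mem_support_iff, Finsupp.equivMapDomain_apply]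
  · have h2 : gᵀ.mulVec (v + toR (σ w)) = gᵀ.mulVec v + toR w := by
      rw [Matrix.mulVec_add, hσ, Matrix.mulVec_mulVec, hgt, Matrix.one_mulVec]
    simp only [Finsupp.equivMapDomain_apply, Equiv.symm_apply_apply, h2]
end

section
/- Cₙ × Cₙ-equivariance of Equivariant Transporter (Proposition 2): if ψ and φ are Cₙ-equivariant maps on images and Ψ(c) := ℛₙ(ψ(c)), then for all g₁, g₂ ∈ Cₙ, Ψ(T_{g₁}⁰ c) ⋆ φ(T_{g₂}⁰ o) = ρ_reg(g₂ - g₁) · T_{g₂}⁰ ( Ψ(c) ⋆ φ(o) ), where ρ_reg acts by cyclic channel permutation and T_{g₂}⁰ rotates pixel positions. -/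
open Matrix

/-- The planar rotation matrix by angle `θ`. -/
noncomputable def Rot (θ : ℝ) : Matrix (Fin 2) (Fin 2) ℝ :=
  !![Real.cos θ, -Real.sin θ; Real.sin θ, Real.cos θ]

/-- The action `T⁰` of the group element `g^i` (where `g = Rot_{2π/n}` generates `Cₙ`
and `i : ZMod n`) on images `f : ℝ² → ℝ`, given by `(T_{g^i}⁰ f)(x) = f(g^{-i} x)`. -/
noncomputable def Tpow (n : ℕ) (i : ZMod n) (f : (Fin 2 → ℝ) → ℝ) : (Fin 2 → ℝ) → ℝ :=
  fun x => f ((Rot (-(2 * Real.pi * i.val / n))).mulVec x)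

/-- Channelwise cross-correlation of an `n`-channel kernel `K` with an image `h`:
`(K ⋆ h)(v)ᵢ = ∑_{w ∈ ℤ²} Kᵢ(w) h(v + w)`. -/
noncomputable def xcorrN (n : ℕ) (K : ZMod n → ((Fin 2 → ℝ) → ℝ))
    (h : (Fin 2 → ℝ) → ℝ) : (Fin 2 → ℝ) → ZMod n → ℝ :=
  fun v i => ∑' w : Fin 2 → ℤ, K i (toR w) * h (v + toR w)

/-- `Ψ(c) = ℛₙ(ψ(c))`: the `n`-channel lifted kernel, `Ψ(c)ᵢ = T_{g^i}⁰(ψ(c))`. -/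
noncomputable def PsiLift (n : ℕ) (ψ : ((Fin 2 → ℝ) → ℝ) → ((Fin 2 → ℝ) → ℝ))
    (c : (Fin 2 → ℝ) → ℝ) : ZMod n → ((Fin 2 → ℝ) → ℝ) :=
  fun i => Tpow n i (ψ c)

lemma Rot_mul (a b : ℝ) : Rot a * Rot b = Rot (a + b) := by
  simp [Rot, Matrix.mul_fin_two, Real.cos_add, Real.sin_add]
  ring_nf
  exact ⟨trivial, trivial⟩

lemma Rot_zero : Rot 0 = 1 := by
  simp [Rot, Matrix.one_fin_two]

lemma Rot_int (θ : ℝ) (k : ℤ) : Rot (θ + k * (2 * Real.pi)) = Rot θ := by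
  simp [Rot, Real.cos_add_int_mul_two_pi, Real.sin_add_int_mul_two_pi]

lemma Rot_zmod_add (n : ℕ) [NeZero n] (a b : ZMod n) :
    Rot (-(2 * Real.pi * (a + b).val / n)) =
      Rot (-(2 * Real.pi * a.val / n)) * Rot (-(2 * Real.pi * b.val / n)) := by
  rw [Rot_mul]
  obtain ⟨k, hk⟩ : ∃ k : ℕ, a.val + b.val = (a + b).val + n * k := by
    refine ⟨(a.val + b.val) / n, ?_⟩
    have h1 := ZMod.val_add a b
    have h2 := Nat.mod_add_div (a.val + b.val) n
    omega
  have hn : (n : ℝ) ≠ 0 := Nat.cast_ne_zero.mpr (NeZero.ne n)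
  have hθ : -(2 * Real.pi * ((a + b).val : ℝ) / n)
      = (-(2 * Real.pi * a.val / n) + -(2 * Real.pi * b.val / n)) + k * (2 * Real.pi) := by
    have : ((a + b).val : ℝ) = (a.val : ℝ) + b.val - n * k := by
      have := congrArg (fun z : ℕ => (z : ℝ)) hk
      push_cast at this ⊢
      linarith
    rw [this]; field_simp; ring
  rw [hθ]
  have h := Rot_int (-(2 * Real.pi * a.val / n) + -(2 * Real.pi * b.val / n)) (k : ℤ)
  push_cast at h
  exact h

lemma Tpow_comp (n : ℕ) [NeZero n] (i j : ZMod n) (f : (Fin 2 → ℝ) → ℝ) :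
    Tpow n i (Tpow n j f) = Tpow n (i + j) f := by
  funext x
  simp only [Tpow]
  congr 1
  rw [Matrix.mulVec_mulVec, Rot_mul, show i + j = j + i from add_comm i j,
    Rot_zmod_add, Rot_mul]

/-- Cₙ × Cₙ-equivariance of Equivariant Transporter (Proposition 2): if `ψ` and `φ` are
Cₙ-equivariant and `Ψ(c) = ℛₙ(ψ(c))`, then for all `g₁, g₂ ∈ Cₙ`,
`Ψ(T_{g₁}⁰ c) ⋆ φ(T_{g₂}⁰ o) = ρ_reg(g₂ - g₁) · T_{g₂}⁰ (Ψ(c) ⋆ φ(o))`,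
where `(ρ_reg(j) F)(v)ᵢ = F(v)_{i-j}` cyclically shifts channels and `T_{g₂}⁰` rotates
pixel positions. Kernels are assumed finitely supported on the index lattice, and each
element of `Cₙ` is assumed to biject the index lattice. -/
theorem stmt5 (n : ℕ) [NeZero n]
    (ψ φ : ((Fin 2 → ℝ) → ℝ) → ((Fin 2 → ℝ) → ℝ))
    (hψ : ∀ (g : ZMod n) (c), ψ (Tpow n g c) = Tpow n g (ψ c))
    (hφ : ∀ (g : ZMod n) (o), φ (Tpow n g o) = Tpow n g (φ o))
    (hfin : ∀ (c : (Fin 2 → ℝ) → ℝ) (i : ZMod n),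
      (Function.support fun w : Fin 2 → ℤ => PsiLift n ψ c i (toR w)).Finite)
    (hlat : ∀ i : ZMod n, ∃ σ : (Fin 2 → ℤ) ≃ (Fin 2 → ℤ),
      ∀ w : Fin 2 → ℤ, toR (σ w) = (Rot (2 * Real.pi * i.val / n)).mulVec (toR w))
    (c o : (Fin 2 → ℝ) → ℝ) (g₁ g₂ : ZMod n) :
    xcorrN n (PsiLift n ψ (Tpow n g₁ c)) (φ (Tpow n g₂ o))
      = fun x i => xcorrN n (PsiLift n ψ c) (φ o)
          ((Rot (-(2 * Real.pi * g₂.val / n))).mulVec x) (i - (g₂ - g₁)) := by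
  funext x i
  obtain ⟨σ, hσ⟩ := hlat g₂
  simp only [xcorrN, PsiLift, hψ, hφ, Tpow_comp]
  rw [← Equiv.tsum_eq σ]
  refine tsum_congr fun w => ?_
  rw [hσ w]
  simp only [Tpow]
  have hinv : Rot (-(2 * Real.pi * (g₂.val : ℝ) / n)) * Rot (2 * Real.pi * (g₂.val : ℝ) / n)
      = 1 := by
    rw [Rot_mul, neg_add_cancel, Rot_zero]
  have hC : Rot (-(2 * Real.pi * ((i + g₁).val : ℝ) / n)) * Rot (2 * Real.pi * (g₂.val : ℝ) / n)
      = Rot (-(2 * Real.pi * ((i - (g₂ - g₁)).val : ℝ) / n)) := by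
    have h := Rot_zmod_add n (i - (g₂ - g₁)) g₂
    rw [show i - (g₂ - g₁) + g₂ = i + g₁ by ring] at h
    rw [h, mul_assoc, hinv, mul_one]
  congr 1
  · congr 1
    rw [Matrix.mulVec_mulVec, hC]
  · congr 1
    rw [Matrix.mulVec_add, Matrix.mulVec_mulVec, hinv, Matrix.one_mulVec]
end

section
/- Equivariance under placement rotation (special case g₁ = 0 of Proposition 2): if ψ and φ are Cₙ-equivariant and Ψ(c) = ℛₙ(ψ(c)), then for all g ∈ Cₙ, Ψ(c) ⋆ φ(T_g⁰ o) = T_g^{reg} ( Ψ(c) ⋆ φ(o) ), where T_g^{reg} = ρ_reg(g) ∘ T_g⁰ both rotates pixel positions and cyclically shifts the channels. -/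
open Matrix

lemma Rot_add_int (a : ℝ) (k : ℤ) : Rot (a + k * (2 * Real.pi)) = Rot a := by
  simp [Rot, Real.cos_add_int_mul_two_pi, Real.sin_add_int_mul_two_pi]

/-- Equivariance under placement rotation (special case `g₁ = 0` of Proposition 2): if `ψ` and
`φ` are Cₙ-equivariant and `Ψ(c) = ℛₙ(ψ(c))`, then for all `g ∈ Cₙ`,
`Ψ(c) ⋆ φ(T_g⁰ o) = T_g^{reg}(Ψ(c) ⋆ φ(o))` where `T_g^{reg} = ρ_reg(g) ∘ T_g⁰` both rotates
pixel positions and cyclically shifts the channels: `(T_g^{reg} F)(x)ᵢ = F(g⁻¹x)_{i-g}`. -/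
theorem stmt6 (n : ℕ) [NeZero n]
    (ψ φ : ((Fin 2 → ℝ) → ℝ) → ((Fin 2 → ℝ) → ℝ))
    (hψ : ∀ (g : ZMod n) (c), ψ (Tpow n g c) = Tpow n g (ψ c))
    (hφ : ∀ (g : ZMod n) (o), φ (Tpow n g o) = Tpow n g (φ o))
    (hfin : ∀ (c : (Fin 2 → ℝ) → ℝ) (i : ZMod n),
      (Function.support fun w : Fin 2 → ℤ => PsiLift n ψ c i (toR w)).Finite)
    (hlat : ∀ i : ZMod n, ∃ σ : (Fin 2 → ℤ) ≃ (Fin 2 → ℤ),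
      ∀ w : Fin 2 → ℤ, toR (σ w) = (Rot (2 * Real.pi * i.val / n)).mulVec (toR w))
    (c o : (Fin 2 → ℝ) → ℝ) (g : ZMod n) :
    xcorrN n (PsiLift n ψ c) (φ (Tpow n g o))
      = fun x i => xcorrN n (PsiLift n ψ c) (φ o)
          ((Rot (-(2 * Real.pi * g.val / n))).mulVec x) (i - g) := by
  have hn : (n : ℝ) ≠ 0 := Nat.cast_ne_zero.mpr (NeZero.ne n)
  funext x i
  obtain ⟨σ, hσ⟩ := hlat g
  -- the integer k with i.val - g.val - (i-g).val = n * k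
  have hzero : (((i.val : ℤ) - g.val - ((i - g).val : ℤ) : ℤ) : ZMod n) = 0 := by
    push_cast
    simp [ZMod.natCast_val, ZMod.intCast_cast]
  obtain ⟨k, hk⟩ := (ZMod.intCast_zmod_eq_zero_iff_dvd _ n).mp hzero
  have hangle : Rot (-(2 * Real.pi * (i.val : ℝ) / n) + 2 * Real.pi * (g.val : ℝ) / n)
      = Rot (-(2 * Real.pi * ((i - g).val : ℝ) / n)) := by
    have key : ∀ a b m kk nn : ℝ, nn ≠ 0 → a - b - m = nn * kk →
        (-(2 * Real.pi * a / nn) + 2 * Real.pi * b / nn)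
          = -(2 * Real.pi * m / nn) + (-kk) * (2 * Real.pi) := by
      intro a b m kk nn h0 h
      field_simp
      linear_combination (-1 : ℝ) * h
    have hk' : ((i.val : ℝ)) - (g.val : ℝ) - (((i - g).val : ℝ)) = n * k := by
      exact_mod_cast congrArg (fun z : ℤ => (z : ℝ)) hk
    have : (-(2 * Real.pi * (i.val : ℝ) / n) + 2 * Real.pi * (g.val : ℝ) / n)
        = -(2 * Real.pi * ((i - g).val : ℝ) / n) + (-k : ℤ) * (2 * Real.pi) := by
      push_cast
      exact key _ _ _ _ _ hn hk'
    rw [this, Rot_add_int]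
  simp only [xcorrN, PsiLift, hφ, Tpow]
  refine ((Equiv.tsum_eq σ _).symm).trans (tsum_congr fun w => ?_)
  rw [hσ w]
  rw [Matrix.mulVec_mulVec, Rot_mul, hangle, Matrix.mulVec_add, Matrix.mulVec_mulVec,
    Rot_mul, neg_add_cancel, Rot_zero, Matrix.one_mulVec]
end

section
/- Invariance property (g₁ = g₂ = g in Proposition 2): a simultaneous rotation of both the crop and the scene by g ∈ Cₙ rotates the output pixelwise but leaves the channel order unchanged: Ψ(T_g⁰ c) ⋆ φ(T_g⁰ o) = T_g⁰ ( Ψ(c) ⋆ φ(o) ). -/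
open Matrix

lemma Rot_inv_apply (θ : ℝ) (x : Fin 2 → ℝ) :
    (Rot (-θ)).mulVec ((Rot θ).mulVec x) = x := by
  rw [Matrix.mulVec_mulVec, Rot_mul, neg_add_cancel, Rot_zero, Matrix.one_mulVec]

lemma Rot_conj_apply (a b : ℝ) (x : Fin 2 → ℝ) :
    (Rot (-a)).mulVec ((Rot b).mulVec ((Rot a).mulVec x)) = (Rot b).mulVec x := by
  rw [Matrix.mulVec_mulVec, Matrix.mulVec_mulVec, Rot_mul, Rot_mul]
  have h : -a + b + a = b := by ring
  rw [h]

/-- Invariance property (`g₁ = g₂ = g` in Proposition 2): a simultaneous rotation of both the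
crop and the scene by `g ∈ Cₙ` rotates the output pixelwise but leaves the channel order
unchanged: `Ψ(T_g⁰ c) ⋆ φ(T_g⁰ o) = T_g⁰(Ψ(c) ⋆ φ(o))`. -/
theorem stmt7 (n : ℕ) [NeZero n]
    (ψ φ : ((Fin 2 → ℝ) → ℝ) → ((Fin 2 → ℝ) → ℝ))
    (hψ : ∀ (g : ZMod n) (c), ψ (Tpow n g c) = Tpow n g (ψ c))
    (hφ : ∀ (g : ZMod n) (o), φ (Tpow n g o) = Tpow n g (φ o))
    (hfin : ∀ (c : (Fin 2 → ℝ) → ℝ) (i : ZMod n),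
      (Function.support fun w : Fin 2 → ℤ => PsiLift n ψ c i (toR w)).Finite)
    (hlat : ∀ i : ZMod n, ∃ σ : (Fin 2 → ℤ) ≃ (Fin 2 → ℤ),
      ∀ w : Fin 2 → ℤ, toR (σ w) = (Rot (2 * Real.pi * i.val / n)).mulVec (toR w))
    (c o : (Fin 2 → ℝ) → ℝ) (g : ZMod n) :
    xcorrN n (PsiLift n ψ (Tpow n g c)) (φ (Tpow n g o))
      = fun x i => xcorrN n (PsiLift n ψ c) (φ o)
          ((Rot (-(2 * Real.pi * g.val / n))).mulVec x) i := by
  funext v i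
  obtain ⟨σ, hσ⟩ := hlat g
  simp only [xcorrN, PsiLift, hψ, hφ, Tpow]
  rw [← Equiv.tsum_eq σ]
  congr 1
  funext w
  rw [hσ, Rot_conj_apply, Matrix.mulVec_add, Rot_inv_apply]
end
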